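/- Let (X,d) be a δ-hyperbolic space and g an isometry of (X,d). Then for every x ∈ X: (i) d(x, g²x) ≤ d(x, gx) + ℓ(g) + 2δ; (ii) for every integer p ≥ 0, d(x, g^{2^p} x) ≤ d(x, gx) + (2^p − 1)·ℓ(g) + 2pδ; (iii) for every integer n ≥ 1, d(x, gⁿx) ≤ d(x, gx) + (n−1)·ℓ(g) + 4δ·ln(n)/ln(2). -/

import Mathlib

open Metric Filter Set
open scoped Classical ENNReal

noncomputable section

/-- The Gromov product `(x|y)_w`. -/
def gromovProd {X : Type*} [MetricSpace X] (w x y : X) : ℝ :=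
  (dist w x + dist w y - dist x y) / 2

/-- An arclength-parametrized geodesic segment from `x` to `y`,
defined on `[0, dist x y]`. -/
def IsGeodesicSegment {X : Type*} [MetricSpace X] (f : ℝ → X) (x y : X) : Prop :=
  f 0 = x ∧ f (dist x y) = y ∧
    ∀ s ∈ Set.Icc (0 : ℝ) (dist x y), ∀ t ∈ Set.Icc (0 : ℝ) (dist x y),
      dist (f s) (f t) = |s - t|

/-- A δ-hyperbolic space: a proper geodesic metric space all of whose geodesic
triangles are δ-thin, in the sense that two points having the same image under the
comparison map onto the associated tripod are at distance at most δ.  (Two points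
with the same tripod image lie on two sides issued from a common vertex `x`, at the
same arclength parameter `t ≤ (y|z)_x`.) -/
def IsDeltaHyperbolic (X : Type*) [MetricSpace X] (δ : ℝ) : Prop :=
  ProperSpace X ∧
    (∀ x y : X, ∃ f : ℝ → X, IsGeodesicSegment f x y) ∧
    (∀ x y z : X, ∀ f g : ℝ → X, IsGeodesicSegment f x y → IsGeodesicSegment g x z →
      ∀ t : ℝ, 0 ≤ t → t ≤ gromovProd x y z → dist (f t) (g t) ≤ δ)

/-- A sequence converging to a point of the Gromov boundary: the Gromov products of
pairs of points of the sequence tend to `+∞`. -/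
def IsGromovSeq {X : Type*} [MetricSpace X] (x₀ : X) (u : ℕ → X) : Prop :=
  ∀ C : ℝ, ∃ N : ℕ, ∀ m n : ℕ, N ≤ m → N ≤ n → C ≤ gromovProd x₀ (u m) (u n)

/-- Two Gromov sequences define the same boundary point when their mutual Gromov
products tend to `+∞`. -/
def GromovSeqEquiv {X : Type*} [MetricSpace X] (x₀ : X) (u v : ℕ → X) : Prop :=
  ∀ C : ℝ, ∃ N : ℕ, ∀ m n : ℕ, N ≤ m → N ≤ n → C ≤ gromovProd x₀ (u m) (v n)

/-- The space is non-elementary: its Gromov boundary has at least three points. -/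
def NonElementary (X : Type*) [MetricSpace X] : Prop :=
  ∃ (x₀ : X) (u v w : ℕ → X), IsGromovSeq x₀ u ∧ IsGromovSeq x₀ v ∧ IsGromovSeq x₀ w ∧
    ¬ GromovSeqEquiv x₀ u v ∧ ¬ GromovSeqEquiv x₀ u w ∧ ¬ GromovSeqEquiv x₀ v w

/-- The action of `Γ` on `X` is by isometries. -/
def IsIsometricAction (Γ X : Type*) [Group Γ] [MetricSpace X] [MulAction Γ X] : Prop :=
  ∀ γ : Γ, Isometry fun x : X => γ • x

/-- The action of `Γ` on `X` is proper. -/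
def IsProperAction (Γ X : Type*) [Group Γ] [MetricSpace X] [MulAction Γ X] : Prop :=
  ∀ (x : X) (R : ℝ), {γ : Γ | dist x (γ • x) ≤ R}.Finite

/-- `diam (Γ\X) ≤ D` for the quotient distance `d̄(Γx,Γy) = inf_γ d(x,γy)`. -/
def CodiamLE (Γ X : Type*) [Group Γ] [MetricSpace X] [MulAction Γ X] (D : ℝ) : Prop :=
  ∀ x y : X, sInf {r : ℝ | ∃ γ : Γ, r = dist x (γ • y)} ≤ D

/-- The entropy of `(X,d)` endowed with a proper isometric action of `Γ`, computed with
the orbit counting measure `μ_xΓ = Σ_γ Dirac (γ • x)` (for a cocompact proper action this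
is the common value of the entropies of all invariant measures). -/
def orbitEntropy (Γ : Type*) {X : Type*} [Group Γ] [MetricSpace X] [MulAction Γ X]
    (x : X) : ℝ :=
  liminf (fun R : ℝ => Real.log (Nat.card {γ : Γ // dist x (γ • x) < R}) / R) atTop

/-- The stable (asymptotic) displacement `ℓ(γ) = lim d(x, γⁿ x)/n`
(the limit exists and is independent of `x`; it is expressed here as a `liminf`). -/
def stableDisp {Γ X : Type*} [Group Γ] [MetricSpace X] [MulAction Γ X] (γ : Γ) (x : X) : ℝ :=
  liminf (fun n : ℕ => dist x (γ ^ n • x) / (n : ℝ)) atTop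

/-- The pointwise systole `sys_Γ(x) = inf {d(x,γx) : γ ≠ 1}`. -/
def ptSystole (Γ : Type*) {X : Type*} [Group Γ] [MetricSpace X] [MulAction Γ X] (x : X) : ℝ :=
  sInf {r : ℝ | ∃ γ : Γ, γ ≠ 1 ∧ r = dist x (γ • x)}

/-- The global systole `Sys_Γ(X) = inf_x sys_Γ(x)`. -/
def globSystole (Γ X : Type*) [Group Γ] [MetricSpace X] [MulAction Γ X] : ℝ :=
  sInf {r : ℝ | ∃ x : X, r = ptSystole Γ x}

/-- The distance of `(X,d)` is convex: for any two affinely reparametrized geodesic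
segments `c₁, c₂`, the function `t ↦ d(c₁(t), c₂(t))` is convex on `[0,1]`. -/
def ConvexDist (X : Type*) [MetricSpace X] : Prop :=
  ∀ (x y x' y' : X) (f g : ℝ → X), IsGeodesicSegment f x y → IsGeodesicSegment g x' y' →
    ConvexOn ℝ (Set.Icc (0 : ℝ) 1) fun t => dist (f (t * dist x y)) (g (t * dist x' y'))

/-- `f` is a local geodesic on the set `s ⊆ ℝ`. -/
def IsLocalGeodesic {X : Type*} [MetricSpace X] (f : ℝ → X) (s : Set ℝ) : Prop :=
  ∀ t ∈ s, ∃ ε > (0 : ℝ), ∀ u ∈ s ∩ Set.Ioo (t - ε) (t + ε), ∀ v ∈ s ∩ Set.Ioo (t - ε) (t + ε),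
    dist (f u) (f v) = |u - v|

/-- Every local geodesic defined on a nontrivial segment extends to a local geodesic
defined on all of `ℝ`. -/
def GeodesicallyComplete (X : Type*) [MetricSpace X] : Prop :=
  ∀ (a b : ℝ), a < b → ∀ f : ℝ → X, IsLocalGeodesic f (Set.Icc a b) →
    ∃ g : ℝ → X, IsLocalGeodesic g Set.univ ∧ ∀ t ∈ Set.Icc a b, g t = f t

/-- The pair `(u,v)` generates a free sub-semigroup: two products of positive powers of
`u` and `v` coincide only when they coincide as words. -/
def FreeSemigroupPair {G : Type*} [Monoid G] (u v : G) : Prop :=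
  Function.Injective ⇑(FreeMonoid.lift fun b : Bool => bif b then u else v)

/-- The pair `(u,v)` generates a free subgroup, free on `{u,v}`. -/
def FreeGroupPair {G : Type*} [Group G] (u v : G) : Prop :=
  Function.Injective ⇑(FreeGroup.lift fun b : Bool => bif b then u else v)

/-- A group is virtually cyclic if it has a cyclic subgroup of finite index. -/
def VirtuallyCyclic (G : Type*) [Group G] : Prop :=
  ∃ H : Subgroup G, H.FiniteIndex ∧ IsCyclic ↥H

/-- The stable displacement of an isometry `g` of `X`. -/
def stableDispIso {X : Type*} [MetricSpace X] (g : X ≃ᵢ X) (x : X) : ℝ :=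
  liminf (fun n : ℕ => dist x ((g ^ n) x) / (n : ℝ)) atTop

/-- The minimal displacement `s(g) = inf_x d(x, g x)` of an isometry `g` of `X`. -/
def minDisp {X : Type*} [MetricSpace X] (g : X ≃ᵢ X) : ℝ :=
  ⨅ x : X, dist x (g x)

/-- Discreteness of a subgroup of the isometry group of a proper metric space,
expressed equivalently by the properness of its natural action. -/
def DiscreteIsomSubgroup {X : Type*} [MetricSpace X] (H : Subgroup (X ≃ᵢ X)) : Prop :=
  ∀ (x : X) (R : ℝ), {g : X ≃ᵢ X | g ∈ H ∧ dist x (g x) ≤ R}.Finite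

/-- The Margulis constant `L(a,b)` of a pair of isometries. -/
def margulisConst {X : Type*} [MetricSpace X] (a b : X ≃ᵢ X) : ℝ :=
  sInf {r : ℝ | ∃ (x : X) (p q : ℤ), p ≠ 0 ∧ q ≠ 0 ∧ a ^ p ≠ 1 ∧ b ^ q ≠ 1 ∧
    r = max (dist x ((a ^ p) x)) (dist x ((b ^ q) x))}

/-- Word length with respect to a generating set `S` (words in `S ∪ S⁻¹`). -/
def wordLength {Γ : Type*} [Group Γ] (S : Set Γ) (γ : Γ) : ℕ :=
  sInf {n : ℕ | ∃ l : List Γ, l.length = n ∧ (∀ s ∈ l, s ∈ S ∨ s⁻¹ ∈ S) ∧ l.prod = γ}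

/-- The algebraic entropy `Ent(Γ,Σ)` of a group with respect to a generating set. -/
def algEntropy (Γ : Type*) [Group Γ] (S : Set Γ) : ℝ :=
  liminf (fun R : ℝ => Real.log (Nat.card {γ : Γ // (wordLength S γ : ℝ) ≤ R}) / R) atTop

/-- `(C, ι)` is a metric realization of the Cayley graph of `(Γ,S)`: `Γ` acts on `C` by
isometries, `ι` is the equivariant vertex embedding, the distance between vertices is the
word distance, and every point of `C` is within distance `1/2` of a vertex. -/
def IsCayleyRealization (Γ : Type*) [Group Γ] (S : Set Γ) (C : Type*) [MetricSpace C]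
    [MulAction Γ C] (ι : Γ → C) : Prop :=
  IsIsometricAction Γ C ∧
    (∀ γ g : Γ, ι (γ * g) = γ • ι g) ∧
    (∀ γ g : Γ, dist (ι γ) (ι g) = (wordLength S (γ⁻¹ * g) : ℝ)) ∧
    (∀ x : C, ∃ γ : Γ, dist x (ι γ) ≤ 1 / 2)

/-- An `α`-HT (`α`-hyperbolically thick) action: an isometric action on a δ-hyperbolic
space all of whose nontrivial elements have stable displacement at least `α`. -/
def IsHTAction (Γ X : Type*) [Group Γ] [MetricSpace X] [MulAction Γ X] (δ α : ℝ) : Prop :=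
  IsDeltaHyperbolic X δ ∧ IsIsometricAction Γ X ∧
    ∀ γ : Γ, γ ≠ 1 → ∀ x : X, α ≤ stableDisp γ x

/-- Witness of an `α`-HT action of `Γ` on some δ-hyperbolic space. -/
structure HTWitness (Γ : Type*) [Group Γ] (δ α : ℝ) where
  X : Type
  [ms : MetricSpace X]
  [ma : MulAction Γ X]
  cond : IsHTAction Γ X δ α

/-- A `(δ,α)`-HT group: non-cyclic, admitting an `α`-HT isometric action on some
δ-hyperbolic space. -/
def IsHTGroup (Γ : Type*) [Group Γ] (δ α : ℝ) : Prop :=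
  ¬ IsCyclic Γ ∧ Nonempty (HTWitness Γ δ α)

/-- Witness for the `(δ,α)`-non-abelian condition on a non-commuting pair `a, b`:
a morphism from `⟨a,b⟩` to a `(δ,α)`-HT group whose image is isomorphic neither to the
trivial group nor to `ℤ`. -/
structure NonAbWitness {Γ : Type*} [Group Γ] (δ α : ℝ) (a b : Γ) where
  G : Type
  [grp : Group G]
  ρ : ↥(Subgroup.closure ({a, b} : Set Γ)) →* G
  ht : IsHTGroup G δ α
  ntriv : ρ.range ≠ ⊥
  notZ : ¬ Nonempty (↥ρ.range ≃* Multiplicative ℤ)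

/-- A `(δ,α)`-non-abelian group. -/
def NonAbelianDA (Γ : Type*) [Group Γ] (δ α : ℝ) : Prop :=
  (∃ a b : Γ, a * b ≠ b * a) ∧
    ∀ a b : Γ, a * b ≠ b * a → Nonempty (NonAbWitness δ α a b)

/-- A `(δ,α)`-transitive non-abelian group: `(δ,α)`-non-abelian, and commutation is a
transitive relation on `Γ \ {1}`. -/
def TransNonAbelianDA (Γ : Type*) [Group Γ] (δ α : ℝ) : Prop :=
  NonAbelianDA Γ δ α ∧
    ∀ a b c : Γ, a ≠ 1 → b ≠ 1 → c ≠ 1 → a * b = b * a → b * c = c * b → a * c = c * a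

/-- Extended-real logarithm of an extended nonnegative real. -/
def ennlog (x : ENNReal) : EReal :=
  if x = 0 then ⊥ else if x = ⊤ then ⊤ else ((Real.log x.toReal : ℝ) : EReal)

/-- The entropy of a metric measure space,
`Ent(Y,d,μ) = liminf_{R→∞} (1/R) ln μ(B(y,R))`, valued in `EReal`. -/
def mmEntropy {Y : Type*} [MetricSpace Y] [MeasurableSpace Y] (μ : MeasureTheory.Measure Y) (y : Y) : EReal :=
  liminf (fun R : ℝ => ((R⁻¹ : ℝ) : EReal) * ennlog (μ (Metric.ball y R))) atTop

end
section AuxPowerDisp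

open Filter

variable {X : Type*} [MetricSpace X]

private lemma fourpt {δ : ℝ} (hX : IsDeltaHyperbolic X δ) (w u v z : X) :
    min (dist w u + dist w v - dist u v) (dist w v + dist w z - dist v z) - 2 * δ
      ≤ dist w u + dist w z - dist u z := by
  obtain ⟨_, hgeo, hthin⟩ := hX
  obtain ⟨f, hf⟩ := hgeo w u
  obtain ⟨h, hh⟩ := hgeo w v
  obtain ⟨k, hk⟩ := hgeo w z
  have t1 : dist u v ≤ dist w u + dist w v := by
    have := dist_triangle u w v; rwa [dist_comm u w] at this
  have t2 : dist v z ≤ dist w v + dist w z := by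
    have := dist_triangle v w z; rwa [dist_comm v w] at this
  have t3 : dist w v ≤ dist w u + dist u v := dist_triangle w u v
  have t4 : dist w v ≤ dist w z + dist z v := dist_triangle w z v
  set P1 := gromovProd w u v with hP1
  set P2 := gromovProd w v z with hP2
  have hP1def : P1 = (dist w u + dist w v - dist u v) / 2 := rfl
  have hP2def : P2 = (dist w v + dist w z - dist v z) / 2 := rfl
  set t := min P1 P2 with htdef
  have ht0 : 0 ≤ t :=
    le_min (by rw [hP1def]; linarith) (by rw [hP2def]; linarith)
  have htP1 : t ≤ P1 := min_le_left _ _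
  have htP2 : t ≤ P2 := min_le_right _ _
  have htu : t ≤ dist w u := by
    have : P1 ≤ dist w u := by rw [hP1def]; linarith
    exact htP1.trans this
  have htz : t ≤ dist w z := by
    have : P2 ≤ dist w z := by
      rw [hP2def]; rw [dist_comm z v] at t4; linarith
    exact htP2.trans this
  have hfh : dist (f t) (h t) ≤ δ := hthin w u v f h hf hh t ht0 htP1
  have hhk : dist (h t) (k t) ≤ δ := hthin w v z h k hh hk t ht0 htP2
  have hdu : dist u (f t) = dist w u - t := by
    conv_lhs => rw [← hf.2.1]
    rw [hf.2.2 (dist w u) ⟨dist_nonneg, le_refl _⟩ t ⟨ht0, htu⟩,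
      abs_of_nonneg (by linarith)]
  have hdz : dist (k t) z = dist w z - t := by
    conv_lhs => rw [← hk.2.1]
    rw [hk.2.2 t ⟨ht0, htz⟩ (dist w z) ⟨dist_nonneg, le_refl _⟩,
      abs_of_nonpos (by linarith)]
    ring
  have chain : dist u z ≤ dist u (f t) + dist (f t) (h t) + dist (h t) (k t) + dist (k t) z := by
    calc dist u z ≤ dist u (k t) + dist (k t) z := dist_triangle _ _ _
      _ ≤ (dist u (h t) + dist (h t) (k t)) + dist (k t) z := by
          have := dist_triangle u (h t) (k t); linarith
      _ ≤ ((dist u (f t) + dist (f t) (h t)) + dist (h t) (k t)) + dist (k t) z := by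
          have := dist_triangle u (f t) (h t); linarith
  have key : 2 * t - 2 * δ ≤ dist w u + dist w z - dist u z := by
    rw [hdu, hdz] at chain; linarith
  have hmin : min (dist w u + dist w v - dist u v) (dist w v + dist w z - dist v z) = 2 * t := by
    rcases le_total P1 P2 with hP | hP
    · rw [htdef, min_eq_left hP, min_eq_left (by rw [hP1def, hP2def] at hP; linarith), hP1def]
      ring
    · rw [htdef, min_eq_right hP, min_eq_right (by rw [hP1def, hP2def] at hP; linarith), hP2def]
      ring
  rw [hmin]; linarith

private lemma keyC {X : Type*} [MetricSpace X] {δ : ℝ} (hδ : 0 < δ)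
    (hX : IsDeltaHyperbolic X δ) (g : X ≃ᵢ X) (x : X) {L : ℝ} (hL0 : 0 ≤ L)
    (hLlim : Filter.Tendsto (fun k : ℕ => dist x ((g ^ k) x) / (k : ℝ))
      Filter.atTop (nhds L))
    (m n : ℕ) (hm : 1 ≤ m) (hn : 1 ≤ n) :
    dist x ((g ^ (m + n)) x) - (((m : ℝ) + n) - 1) * L ≤
      max (dist x ((g ^ m) x) - ((m : ℝ) - 1) * L)
          (dist x ((g ^ n) x) - ((n : ℝ) - 1) * L) + 2 * δ := by
  set a : ℕ → ℝ := fun k => dist x ((g ^ k) x) with ha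
  have hdist : ∀ s t : ℕ, dist ((g ^ s) x) ((g ^ (s + t)) x) = a t := by
    intro s t
    rw [pow_add, IsometryEquiv.mul_apply, IsometryEquiv.dist_eq, ha]
  have ha0 : ∀ k, 0 ≤ a k := fun k => dist_nonneg
  set T := a (m + n) with hT
  set km := T - a m - 2 * δ with hkm
  set kn := T - a n - 2 * δ with hkn
  have hmax1 := le_max_left (a m - ((m : ℝ) - 1) * L) (a n - ((n : ℝ) - 1) * L)
  have hmax2 := le_max_right (a m - ((m : ℝ) - 1) * L) (a n - ((n : ℝ) - 1) * L)
  have hmL : 0 ≤ (m : ℝ) * L := mul_nonneg (Nat.cast_nonneg m) hL0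
  have hnL : 0 ≤ (n : ℝ) * L := mul_nonneg (Nat.cast_nonneg n) hL0
  rcases le_or_gt km 0 with hcm | hκm
  · linarith [hmax1]
  rcases le_or_gt kn 0 with hcn | hκn
  · linarith [hmax2]
  -- main case: build the chain
  set e : ℕ → ℕ :=
    fun j => Nat.rec (motive := fun _ => ℕ) 0
      (fun i acc => acc + if i % 2 = 0 then m else n) j with he
  have e_succ : ∀ j, e (j + 1) = e j + if j % 2 = 0 then m else n := by
    intro j; simp only [he]
  have e_step2 : ∀ j, e (j + 2) = e j + (m + n) := by
    intro j
    have h1 : e (j + 2) = e (j + 1) + if (j + 1) % 2 = 0 then m else n := by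
      simp only [he]
    rw [h1, e_succ]
    rcases Nat.mod_two_eq_zero_or_one j with h | h
    · have h2 : (j + 1) % 2 = 1 := by omega
      rw [h, h2, if_pos rfl, if_neg (by decide)]; omega
    · have h2 : (j + 1) % 2 = 0 := by omega
      rw [h, h2, if_pos rfl, if_neg (by decide)]; omega
  have e_even : ∀ r : ℕ, e (2 * r) = r * (m + n) := by
    intro r
    induction r with
    | zero => rw [Nat.zero_mul, Nat.mul_zero]; rfl
    | succ r ih =>
      have h1 : 2 * (r + 1) = 2 * r + 2 := by ring
      rw [h1, e_step2, ih]; ring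
  have e_mono : Monotone e := by
    apply monotone_nat_of_le_succ
    intro j; rw [e_succ]; exact Nat.le_add_right _ _
  have dist_p : ∀ i j : ℕ, i ≤ j →
      dist ((g ^ e i) x) ((g ^ e j) x) = a (e j - e i) := by
    intro i j hij
    have h1 : e i + (e j - e i) = e j := Nat.add_sub_cancel' (e_mono hij)
    conv_lhs => rw [← h1]
    exact hdist (e i) (e j - e i)
  set sf : ℕ → ℝ := fun i => a (if i % 2 = 0 then m else n) with hsf
  set κ : ℕ → ℝ := fun i => T - sf i - 2 * δ with hκ
  have κ_def : ∀ i, κ i = T - a (if i % 2 = 0 then m else n) - 2 * δ := by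
    intro i; simp only [hκ, hsf]
  have sf_def : ∀ i, sf i = a (if i % 2 = 0 then m else n) := by
    intro i; simp only [hsf]
  have sf_per : ∀ i, sf (i + 2) = sf i := by
    intro i
    rw [sf_def, sf_def]
    have h2 : (i + 2) % 2 = i % 2 := by omega
    rw [h2]
  have κ_per : ∀ i, κ (i + 2) = κ i := by
    intro i; simp only [hκ, sf_per]
  have κ_pos : ∀ i, 0 < κ i := by
    intro i
    rw [κ_def]
    rcases Nat.mod_two_eq_zero_or_one i with h | h
    · rw [h, if_pos rfl]; linarith
    · rw [h, if_neg (by decide)]; linarith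
  have sdist : ∀ i : ℕ, dist ((g ^ e i) x) ((g ^ e (i + 1)) x) = sf i := by
    intro i
    rw [dist_p i (i + 1) (Nat.le_succ i), sf_def]
    congr 1
    rw [e_succ]
    omega
  have skipdist : ∀ i : ℕ, dist ((g ^ e i) x) ((g ^ e (i + 2)) x) = T := by
    intro i
    rw [dist_p i (i + 2) (by omega), hT]
    congr 1
    rw [e_step2]
    omega
  have step : ∀ k : ℕ, ∀ i j : ℕ, i + 2 + k = j →
      dist ((g ^ e (i + 1)) x) ((g ^ e j) x) + κ (i + 1)
        ≤ dist ((g ^ e i) x) ((g ^ e j) x) := by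
    intro k
    induction k with
    | zero =>
      intro i j hij
      obtain rfl : j = i + 2 := by omega
      have d1 : dist ((g ^ e (i + 1)) x) ((g ^ e (i + 2)) x) = sf (i + 1) := by
        have h2 : i + 2 = i + 1 + 1 := by omega
        rw [h2]; exact sdist (i + 1)
      rw [d1, skipdist i, κ_def, ← sf_def]
      linarith
    | succ k ih =>
      intro i j hij
      have IH := ih (i + 1) j (by omega)
      have hidx : i + 1 + 1 = i + 2 := by omega
      rw [hidx] at IH
      have h4 := fourpt hX ((g ^ e (i + 1)) x) ((g ^ e i) x) ((g ^ e j) x)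
        ((g ^ e (i + 2)) x)
      have e_d1 : dist ((g ^ e (i + 1)) x) ((g ^ e i) x) = sf i := by
        rw [dist_comm]; exact sdist i
      have e_d2 : dist ((g ^ e (i + 1)) x) ((g ^ e (i + 2)) x) = sf (i + 1) := by
        have h2 : i + 2 = i + 1 + 1 := by omega
        rw [h2]; exact sdist (i + 1)
      have e_d3 : dist ((g ^ e i) x) ((g ^ e (i + 2)) x) = T := skipdist i
      rw [e_d1, e_d2, e_d3, dist_comm ((g ^ e j) x) ((g ^ e (i + 2)) x)] at h4
      have hκ1 : κ (i + 1) = T - sf (i + 1) - 2 * δ := by simp only [hκ]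
      have hκ0 : κ i = T - sf i - 2 * δ := by simp only [hκ]
      rcases le_total
        (sf i + dist ((g ^ e (i + 1)) x) ((g ^ e j) x) - dist ((g ^ e i) x) ((g ^ e j) x))
        (dist ((g ^ e (i + 1)) x) ((g ^ e j) x) + sf (i + 1)
          - dist ((g ^ e (i + 2)) x) ((g ^ e j) x)) with hc | hc
      · rw [min_eq_left hc] at h4
        linarith
      · rw [min_eq_right hc] at h4
        rw [κ_per] at IH
        linarith [κ_pos i]
  have tele : ∀ k : ℕ, ∀ i j : ℕ, i + 2 + k = j →
      T + ∑ u ∈ Finset.Ico (i + 1) (j - 1), κ u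
        ≤ dist ((g ^ e i) x) ((g ^ e j) x) := by
    intro k
    induction k with
    | zero =>
      intro i j hij
      obtain rfl : j = i + 2 := by omega
      have h2 : i + 2 - 1 = i + 1 := by omega
      rw [h2, Finset.Ico_self, Finset.sum_empty, skipdist i, add_zero]
    | succ k ih =>
      intro i j hij
      have IH := ih (i + 1) j (by omega)
      have hstep := step (k + 1) i j hij
      have hsum : ∑ u ∈ Finset.Ico (i + 1) (j - 1), κ u
          = κ (i + 1) + ∑ u ∈ Finset.Ico (i + 1 + 1) (j - 1), κ u :=
        Finset.sum_eq_sum_Ico_succ_bot (by omega) κ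
      rw [hsum]
      linarith
  have sum_eval : ∀ r : ℕ,
      ∑ u ∈ Finset.Ico 1 (2 * r + 1), κ u = (r : ℝ) * (km + kn) := by
    intro r
    induction r with
    | zero => simp
    | succ r ih =>
      have h1 : 2 * (r + 1) + 1 = (2 * r + 1) + 1 + 1 := by ring
      rw [h1, Finset.sum_Ico_succ_top (by omega), Finset.sum_Ico_succ_top (by omega), ih]
      have hκa : κ (2 * r + 1) = kn := by
        rw [κ_def]
        have hmod : (2 * r + 1) % 2 = 1 := by omega
        rw [hmod, if_neg (by decide), hkn]
      have hκb : κ (2 * r + 1 + 1) = km := by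
        rw [κ_def]
        have hmod : (2 * r + 1 + 1) % 2 = 0 := by omega
        rw [hmod, if_pos rfl, hkm]
      rw [hκa, hκb]
      push_cast
      ring
  have grow : ∀ r : ℕ, (r : ℝ) * (km + kn) ≤ a ((r + 1) * (m + n)) := by
    intro r
    have h1 := tele (2 * r) 0 (2 * r + 2) (by omega)
    have h2 : dist ((g ^ e 0) x) ((g ^ e (2 * r + 2)) x) = a ((r + 1) * (m + n)) := by
      rw [dist_p 0 (2 * r + 2) (by omega)]
      congr 1
      have h3 : 2 * r + 2 = 2 * (r + 1) := by ring
      have h0 : e 0 = 0 := rfl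
      rw [h3, e_even, h0, Nat.sub_zero]
    rw [h2] at h1
    have h4 : (0 : ℕ) + 1 = 1 := rfl
    have h5 : 2 * r + 2 - 1 = 2 * r + 1 := by omega
    rw [h4, h5, sum_eval r] at h1
    linarith [ha0 (m + n)]
  -- pass to the limit
  set N := m + n with hN
  have hN1 : 1 ≤ N := by omega
  have hNR : (0 : ℝ) < (N : ℝ) := by exact_mod_cast (by omega : 0 < N)
  have hinner : Filter.Tendsto (fun r : ℕ => (r + 1) * N) Filter.atTop Filter.atTop := by
    apply Filter.tendsto_atTop_mono (f := id) _ Filter.tendsto_id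
    intro r
    calc id r = r := rfl
      _ ≤ (r + 1) * 1 := by omega
      _ ≤ (r + 1) * N := Nat.mul_le_mul_left _ hN1
  have hlim1 : Filter.Tendsto
      (fun r : ℕ => a ((r + 1) * N) / (((r + 1) * N : ℕ) : ℝ))
      Filter.atTop (nhds L) := hLlim.comp hinner
  have hlim2 : Filter.Tendsto
      (fun r : ℕ => (km + kn) / (((r + 1) * N : ℕ) : ℝ))
      Filter.atTop (nhds 0) :=
    (tendsto_const_div_atTop_nhds_zero_nat (km + kn)).comp hinner
  have hlim3 := hlim1.add hlim2
  rw [add_zero] at hlim3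
  have hptwise : ∀ r : ℕ, (km + kn) / (N : ℝ)
      ≤ a ((r + 1) * N) / (((r + 1) * N : ℕ) : ℝ)
        + (km + kn) / (((r + 1) * N : ℕ) : ℝ) := by
    intro r
    have hD : (0 : ℝ) < (((r + 1) * N : ℕ) : ℝ) := by
      exact_mod_cast Nat.mul_pos (Nat.succ_pos r) (by omega)
    rw [← add_div, div_le_div_iff₀ hNR hD]
    have h5 : (r : ℝ) * (km + kn) ≤ a ((r + 1) * N) := grow r
    push_cast
    nlinarith [hNR]
  have hfinal : (km + kn) / (N : ℝ) ≤ L :=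
    le_of_tendsto_of_tendsto' tendsto_const_nhds hlim3 hptwise
  rw [div_le_iff₀ hNR] at hfinal
  have hcast : ((N : ℕ) : ℝ) = (m : ℝ) + (n : ℝ) := by rw [hN]; push_cast; ring
  rw [hcast] at hfinal
  linarith [hmax1, hmax2]

end AuxPowerDisp
/-- upper bounds for the displacement of powers of an isometry of a
δ-hyperbolic space. -/
theorem power_displacement_upper_bounds
    {X : Type*} [MetricSpace X] (δ : ℝ) (hδ : 0 < δ) (hX : IsDeltaHyperbolic X δ)
    (g : X ≃ᵢ X) (x : X) :
    dist x ((g ^ 2) x) ≤ dist x (g x) + stableDispIso g x + 2 * δ ∧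
    (∀ p : ℕ, dist x ((g ^ (2 ^ p)) x) ≤
      dist x (g x) + ((2 : ℝ) ^ p - 1) * stableDispIso g x + 2 * p * δ) ∧
    (∀ n : ℕ, 1 ≤ n → dist x ((g ^ n) x) ≤
      dist x (g x) + ((n : ℝ) - 1) * stableDispIso g x + 4 * δ * (Real.log n / Real.log 2)) := by
  have hsub : Subadditive (fun k : ℕ => dist x ((g ^ k) x)) := by
    intro s t
    have happ : (g ^ (s + t)) x = (g ^ s) ((g ^ t) x) := by
      rw [pow_add, IsometryEquiv.mul_apply]
    calc dist x ((g ^ (s + t)) x)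
        ≤ dist x ((g ^ s) x) + dist ((g ^ s) x) ((g ^ (s + t)) x) := dist_triangle _ _ _
      _ = dist x ((g ^ s) x) + dist x ((g ^ t) x) := by
          rw [happ, IsometryEquiv.dist_eq]
  have hbdd : BddBelow (Set.range fun k : ℕ => dist x ((g ^ k) x) / (k : ℝ)) := by
    refine ⟨0, ?_⟩
    rintro r ⟨k, rfl⟩
    positivity
  have hLlim := hsub.tendsto_lim hbdd
  set L := hsub.lim with hLdef
  have hL0 : 0 ≤ L :=
    ge_of_tendsto hLlim (Filter.Eventually.of_forall fun k => by positivity)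
  have hsd : stableDispIso g x = L := by
    unfold stableDispIso
    exact hLlim.liminf_eq
  have key := keyC hδ hX g x hL0 hLlim
  have log2pos : 0 < Real.log 2 := Real.log_pos (by norm_num)
  -- part (i)
  have hone := key 1 1 (le_refl 1) (le_refl 1)
  rw [max_self] at hone
  norm_num [pow_one] at hone
  refine ⟨by rw [hsd]; linarith, ?_, ?_⟩
  -- part (ii)
  · intro p
    rw [hsd]
    induction p with
    | zero => norm_num [pow_one]
    | succ p ih =>
      have hk := key (2 ^ p) (2 ^ p) (Nat.one_le_two_pow) (Nat.one_le_two_pow)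
      rw [max_self] at hk
      have hpow : (2 : ℕ) ^ p + 2 ^ p = 2 ^ (p + 1) := by
        rw [pow_succ, mul_two]
      rw [hpow] at hk
      push_cast at hk ih ⊢
      have hp2 : (2 : ℝ) ^ p + (2 : ℝ) ^ p = (2 : ℝ) ^ (p + 1) := by ring
      rw [hp2] at hk
      linarith
  -- part (iii)
  · have hiii : ∀ k : ℕ, 1 ≤ k →
        dist x ((g ^ k) x) - dist x (g x) - ((k : ℝ) - 1) * L
          ≤ 4 * δ * (Real.log k / Real.log 2) := by
      intro k
      induction k using Nat.strong_induction_on with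
      | _ k IH =>
        intro hk1
        rcases eq_or_lt_of_le hk1 with h1 | h1
        · obtain rfl : k = 1 := h1.symm
          norm_num [pow_one]
        rcases eq_or_lt_of_le (Nat.succ_le_of_lt h1) with h2 | h2
        · obtain rfl : k = 2 := h2.symm
          push_cast
          rw [div_self (ne_of_gt log2pos)]
          linarith
        -- k ≥ 3
        have h3k : 3 ≤ k := h2
        set n0 := k / 2 with hn0
        set m0 := k - n0 with hm0
        have hf1 : 1 ≤ n0 := by omega
        have hf2 : n0 ≤ m0 := by omega
        have hf3 : m0 < k := by omega
        have hf4 : n0 < k := by omega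
        have hf5 : m0 + n0 = k := by omega
        have hf6 : 2 * m0 ≤ k + 1 := by omega
        have hf7 : 1 ≤ m0 := by omega
        have hkey := key m0 n0 hf7 hf1
        rw [hf5] at hkey
        have hcast : (m0 : ℝ) + (n0 : ℝ) = (k : ℝ) := by exact_mod_cast hf5
        rw [hcast] at hkey
        have IHm := IH m0 hf3 hf7
        have IHn := IH n0 hf4 hf1
        have hlm : Real.log n0 ≤ Real.log m0 :=
          Real.log_le_log (by exact_mod_cast hf1) (by exact_mod_cast hf2)
        have hIHn' : dist x ((g ^ n0) x) - dist x (g x) - ((n0 : ℝ) - 1) * L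
            ≤ 4 * δ * (Real.log m0 / Real.log 2) := by
          refine IHn.trans ?_
          have hdd : Real.log n0 / Real.log 2 ≤ Real.log m0 / Real.log 2 :=
            (div_le_div_iff_of_pos_right log2pos).mpr hlm
          nlinarith [hδ.le]
        have hnum : 2 * m0 ^ 2 ≤ k ^ 2 := by nlinarith [hf6, h3k]
        have hm0pos : (0 : ℝ) < (m0 : ℝ) := by exact_mod_cast hf7
        have hkpos : (0 : ℝ) < (k : ℝ) := by
          exact_mod_cast (by omega : 0 < k)
        have hloggrow : Real.log 2 + 2 * Real.log m0 ≤ 2 * Real.log k := by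
          have hlog2 : Real.log (2 * (m0 : ℝ) ^ 2) ≤ Real.log ((k : ℝ) ^ 2) :=
            Real.log_le_log (by positivity) (by exact_mod_cast hnum)
          rw [Real.log_mul (by norm_num) (by positivity), Real.log_pow, Real.log_pow]
            at hlog2
          push_cast at hlog2
          linarith
        have hfrac : Real.log m0 / Real.log 2 + 1 / 2 ≤ Real.log k / Real.log 2 := by
          have hstep : (Real.log m0 + Real.log 2 / 2) / Real.log 2
              ≤ Real.log k / Real.log 2 :=
            (div_le_div_iff_of_pos_right log2pos).mpr (by linarith)
          have hexp : (Real.log m0 + Real.log 2 / 2) / Real.log 2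
              = Real.log m0 / Real.log 2 + 1 / 2 := by
            have h22 : Real.log 2 / 2 / Real.log 2 = 1 / 2 := by
              rw [div_div, mul_comm, ← div_div, div_self (ne_of_gt log2pos)]
            rw [add_div, h22]
          linarith [hexp ▸ hstep]
        have hmaxle : max (dist x ((g ^ m0) x) - ((m0 : ℝ) - 1) * L)
              (dist x ((g ^ n0) x) - ((n0 : ℝ) - 1) * L)
            ≤ dist x (g x) + 4 * δ * (Real.log m0 / Real.log 2) :=
          max_le (by linarith) (by linarith)
        have hlast : 4 * δ * (Real.log m0 / Real.log 2) + 2 * δ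
            ≤ 4 * δ * (Real.log k / Real.log 2) := by
          nlinarith [hδ.le, hfrac]
        linarith
    intro n hn
    rw [hsd]
    linarith [hiii n hn]
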